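/- Moment matching for projected systems: let L ∈ ℝ^{N×N}, u₀, e ∈ ℝ^N, σ not an eigenvalue of L, and V, W ∈ ℝ^{N×r} projection matrices with WᵀV = I_r. If (L − σI)⁻¹u₀ lies in the column span of V, i.e., (L − σI)⁻¹u₀ = V r₀ for some r₀ ∈ ℝ^r, and L_r := WᵀLV − σI_r is invertible, then the zeroth moment is matched: eᵀV (WᵀLV − σI_r)⁻¹ Wᵀu₀ = eᵀ(L − σI)⁻¹ u₀. -/
import Mathlib


open Matrix

/-- Moment matching for projected systems: if `WᵀV = I_r`, `(L − σI)⁻¹u₀ = V r₀` for some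
`r₀`, and the reduced matrix `WᵀLV − σI_r` is invertible, then the zeroth moments of the
full and reduced systems agree:
`eᵀ V (WᵀLV − σI_r)⁻¹ Wᵀ u₀ = eᵀ (L − σI)⁻¹ u₀`. -/
theorem zeroth_moment_matching {N r : ℕ}
    (L : Matrix (Fin N) (Fin N) ℝ) (e u₀ : Fin N → ℝ) (σ : ℝ)
    (V W : Matrix (Fin N) (Fin r) ℝ)
    (hbi : Wᵀ * V = (1 : Matrix (Fin r) (Fin r) ℝ))
    (hσ : IsUnit (L - σ • (1 : Matrix (Fin N) (Fin N) ℝ)))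
    (r₀ : Fin r → ℝ)
    (hspan : ((L - σ • (1 : Matrix (Fin N) (Fin N) ℝ))⁻¹).mulVec u₀ = V.mulVec r₀)
    (hred : IsUnit (Wᵀ * L * V - σ • (1 : Matrix (Fin r) (Fin r) ℝ))) :
    e ⬝ᵥ V.mulVec (((Wᵀ * L * V - σ • (1 : Matrix (Fin r) (Fin r) ℝ))⁻¹).mulVec
        (Wᵀ.mulVec u₀)) =
      e ⬝ᵥ ((L - σ • (1 : Matrix (Fin N) (Fin N) ℝ))⁻¹).mulVec u₀ := by
  set A := L - σ • (1 : Matrix (Fin N) (Fin N) ℝ) with hA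
  set B := Wᵀ * L * V - σ • (1 : Matrix (Fin r) (Fin r) ℝ) with hB
  have hu : u₀ = A.mulVec (V.mulVec r₀) := by
    rw [← hspan, mulVec_mulVec, Matrix.mul_nonsing_inv _ ((isUnit_iff_isUnit_det A).mp hσ),
      one_mulVec]
  have hW : Wᵀ.mulVec u₀ = B.mulVec r₀ := by
    rw [hu, mulVec_mulVec, mulVec_mulVec, hB, hA, Matrix.mul_sub, Matrix.sub_mul,
      Matrix.mul_smul, Matrix.mul_one, Matrix.smul_mul, hbi, Matrix.mul_assoc]
  have hr : (B⁻¹).mulVec (Wᵀ.mulVec u₀) = r₀ := by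
    rw [hW, mulVec_mulVec, Matrix.nonsing_inv_mul _ ((isUnit_iff_isUnit_det B).mp hred),
      one_mulVec]
  rw [hr, hspan]
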